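/- Every Schur ring over a finite cyclic group of prime order p is cyclotomic: if A is an S-ring over C_p then there exists K ≤ Aut(C_p) such that the basic sets of A are exactly the orbits of K on C_p. -/

import Mathlib

open scoped BigOperators

/-- The indicator element `X̲ = Σ_{x∈X} x` of a finset in the integral group ring `ℤG`. -/
noncomputable def grpInd {G : Type*} [Group G] (X : Finset G) : MonoidAlgebra ℤ G :=
  ∑ x ∈ X, MonoidAlgebra.single x (1 : ℤ)

/-- A Schur ring over a finite group `G`: a partition of `G` containing `{1}`,
closed under inverses, whose indicator elements span a subring of `ℤG`. -/
structure SchurRing (G : Type*) [Group G] [Fintype G] [DecidableEq G] where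
  parts : Finset (Finset G)
  nonempty_mem : ∀ X ∈ parts, X.Nonempty
  cover : ∀ g : G, ∃ X ∈ parts, g ∈ X
  pairwise_disjoint : ∀ X ∈ parts, ∀ Y ∈ parts, X ≠ Y → Disjoint X Y
  one_mem : ({1} : Finset G) ∈ parts
  inv_mem : ∀ X ∈ parts, X.image (·⁻¹) ∈ parts
  mul_mem : ∀ X ∈ parts, ∀ Y ∈ parts, ∃ c : Finset G → ℤ,
    grpInd X * grpInd Y = ∑ Z ∈ parts, c Z • grpInd Z

namespace SchurRing

variable {G : Type*} [Group G] [Fintype G] [DecidableEq G]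

/-- The underlying `ℤ`-module of the Schur ring: the span of the indicators of basic sets. -/
noncomputable def carrier (A : SchurRing G) : Submodule ℤ (MonoidAlgebra ℤ G) :=
  Submodule.span ℤ {v | ∃ X ∈ A.parts, v = grpInd X}

/-- `X ⊆ G` is an `A`-set if its indicator lies in `A`. -/
def IsASet (A : SchurRing G) (X : Finset G) : Prop := grpInd X ∈ A.carrier

/-- `A` is a subring of `B` (as S-rings over the same group). -/
def le (A B : SchurRing G) : Prop := ∀ X ∈ A.parts, grpInd X ∈ B.carrier

end SchurRing

/-- An algebraic isomorphism of Schur rings: a bijection of basic sets preserving all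
structure constants (the structure constant `c^Z_{X,Y}` is the coefficient of the
product `X̲·Y̲` at any `z ∈ Z`). -/
def IsAlgIso {G G' : Type*} [Group G] [Fintype G] [DecidableEq G]
    [Group G'] [Fintype G'] [DecidableEq G']
    (A : SchurRing G) (A' : SchurRing G') (φ : Finset G → Finset G') : Prop :=
  Set.BijOn φ ↑A.parts ↑A'.parts ∧
  ∀ X ∈ A.parts, ∀ Y ∈ A.parts, ∀ Z ∈ A.parts, ∀ z ∈ Z, ∀ z' ∈ φ Z,
    (grpInd X * grpInd Y).coeff z = (grpInd (φ X) * grpInd (φ Y)).coeff z'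

/-- A combinatorial isomorphism of Schur rings: a bijection `G → G'` mapping basic sets to
basic sets and inducing a Cayley graph isomorphism on each basic set. -/
def IsCombIso {G G' : Type*} [Group G] [Fintype G] [DecidableEq G]
    [Group G'] [Fintype G'] [DecidableEq G']
    (A : SchurRing G) (A' : SchurRing G') (f : G → G') : Prop :=
  Function.Bijective f ∧
  ∀ X ∈ A.parts, X.image f ∈ A'.parts ∧
    ∀ g h : G, h * g⁻¹ ∈ X ↔ f h * (f g)⁻¹ ∈ X.image f

/-- An automorphism of a Schur ring: a permutation of `G` preserving the edge set of
`Cay(G,X)` for every basic set `X`. -/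
def IsSchurAut {G : Type*} [Group G] [Fintype G] [DecidableEq G]
    (A : SchurRing G) (f : G → G) : Prop :=
  Function.Bijective f ∧ ∀ X ∈ A.parts, ∀ g h : G, h * g⁻¹ ∈ X ↔ f h * (f g)⁻¹ ∈ X

/-- Separability with respect to the class of (finite) abelian groups. -/
def SchurRing.IsSeparableAbelian {G : Type} [Group G] [Fintype G] [DecidableEq G]
    (A : SchurRing G) : Prop :=
  ∀ (G' : Type) [CommGroup G'] [Fintype G'] [DecidableEq G'],
    ∀ (A' : SchurRing G') (φ : Finset G → Finset G'),
    IsAlgIso A A' φ →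
    ∃ f : G → G', IsCombIso A A' f ∧ ∀ X ∈ A.parts, φ X = X.image f

set_option linter.unusedSectionVars false
set_option maxHeartbeats 1000000

section SR17
variable {G : Type*} [Group G] [Fintype G] [DecidableEq G]

lemma SR17.grpInd_apply (X : Finset G) (g : G) :
    (grpInd X).coeff g = if g ∈ X then 1 else 0 := by
  classical
  rw [grpInd, MonoidAlgebra.coeff_sum, Finset.sum_apply']
  simp [Finsupp.single_apply]

lemma SR17.grpInd_singleton_one : grpInd ({1} : Finset G) = 1 := by
  rw [grpInd, Finset.sum_singleton, MonoidAlgebra.one_def]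

lemma SR17.part_unique (A : SchurRing G) {X Y : Finset G} (hX : X ∈ A.parts)
    (hY : Y ∈ A.parts) {g : G} (hgX : g ∈ X) (hgY : g ∈ Y) : X = Y := by
  by_contra h
  exact Finset.disjoint_left.mp (A.pairwise_disjoint X hX Y hY h) hgX hgY

lemma SR17.coeff_const (A : SchurRing G) {v : MonoidAlgebra ℤ G} (hv : v ∈ A.carrier)
    {X : Finset G} (hX : X ∈ A.parts) {g h : G} (hg : g ∈ X) (hh : h ∈ X) :
    v.coeff g = v.coeff h := by
  induction hv using Submodule.span_induction with
  | mem w hw =>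
    obtain ⟨Y, hY, rfl⟩ := hw
    rw [SR17.grpInd_apply, SR17.grpInd_apply]
    by_cases hXY : X = Y
    · subst hXY; simp [hg, hh]
    · have hd := A.pairwise_disjoint X hX Y hY hXY
      rw [if_neg (Finset.disjoint_left.mp hd hg), if_neg (Finset.disjoint_left.mp hd hh)]
  | zero => rfl
  | add x y _ _ hx hy => rw [MonoidAlgebra.coeff_add, Finsupp.add_apply, Finsupp.add_apply, hx, hy]
  | smul a x _ hx => rw [MonoidAlgebra.coeff_smul, Finsupp.smul_apply, Finsupp.smul_apply, hx]

lemma SR17.mem_carrier_of_parts (A : SchurRing G) {S : Finset G}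
    (h : ∀ X ∈ A.parts, X ⊆ S ∨ Disjoint X S) : grpInd S ∈ A.carrier := by
  classical
  have hrw : grpInd S = ∑ X ∈ A.parts.filter (· ⊆ S), grpInd X := by
    ext g
    rw [SR17.grpInd_apply, MonoidAlgebra.coeff_sum, Finset.sum_apply']
    by_cases hgS : g ∈ S
    · obtain ⟨Y, hY, hgY⟩ := A.cover g
      have hYS : Y ⊆ S := by
        rcases h Y hY with h' | h'
        · exact h'
        · exact absurd hgS (Finset.disjoint_left.mp h' hgY)
      have hsum : ∑ X ∈ A.parts.filter (· ⊆ S), (grpInd X).coeff g = (grpInd Y).coeff g := by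
        refine Finset.sum_eq_single_of_mem Y (Finset.mem_filter.mpr ⟨hY, hYS⟩) ?_
        intro X hXmem hXY
        rw [Finset.mem_filter] at hXmem
        rw [SR17.grpInd_apply, if_neg]
        intro hgX
        exact hXY (SR17.part_unique A hXmem.1 hY hgX hgY)
      rw [if_pos hgS, hsum, SR17.grpInd_apply, if_pos hgY]
    · rw [if_neg hgS, eq_comm]
      apply Finset.sum_eq_zero
      intro X hXmem
      rw [Finset.mem_filter] at hXmem
      rw [SR17.grpInd_apply, if_neg (fun hgX => hgS (hXmem.2 hgX))]
  rw [hrw]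
  exact Submodule.sum_mem _ fun X hXmem =>
    Submodule.subset_span ⟨X, (Finset.mem_filter.mp hXmem).1, rfl⟩

lemma SR17.part_subset (A : SchurRing G) {S : Finset G} (hS : grpInd S ∈ A.carrier)
    {Y : Finset G} (hY : Y ∈ A.parts) {y0 : G} (hy0 : y0 ∈ Y) (hy0S : y0 ∈ S) : Y ⊆ S := by
  intro y hy
  have h := SR17.coeff_const A hS hY hy hy0
  rw [SR17.grpInd_apply, SR17.grpInd_apply, if_pos hy0S] at h
  by_contra hyS
  rw [if_neg hyS] at h
  exact zero_ne_one h

lemma SR17.mul_mem_carrier (A : SchurRing G) {v w : MonoidAlgebra ℤ G}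
    (hv : v ∈ A.carrier) (hw : w ∈ A.carrier) : v * w ∈ A.carrier := by
  induction hv using Submodule.span_induction with
  | mem x hx =>
    obtain ⟨X, hX, rfl⟩ := hx
    induction hw using Submodule.span_induction with
    | mem y hy =>
      obtain ⟨Y, hY, rfl⟩ := hy
      obtain ⟨c, hc⟩ := A.mul_mem X hX Y hY
      rw [hc]
      exact Submodule.sum_mem _ fun Z hZ =>
        Submodule.smul_mem _ _ (Submodule.subset_span ⟨Z, hZ, rfl⟩)
    | zero => rw [mul_zero]; exact Submodule.zero_mem _
    | add a b _ _ ha hb => rw [mul_add]; exact Submodule.add_mem _ ha hb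
    | smul a x _ hx' => rw [mul_smul_comm]; exact Submodule.smul_mem _ _ hx'
  | zero => rw [zero_mul]; exact Submodule.zero_mem _
  | add a b _ _ ha hb => rw [add_mul]; exact Submodule.add_mem _ ha hb
  | smul a x _ hx' => rw [smul_mul_assoc]; exact Submodule.smul_mem _ _ hx'

lemma SR17.one_mem_carrier (A : SchurRing G) : (1 : MonoidAlgebra ℤ G) ∈ A.carrier := by
  rw [← SR17.grpInd_singleton_one]
  exact Submodule.subset_span ⟨{1}, A.one_mem, rfl⟩

lemma SR17.pow_mem_carrier (A : SchurRing G) {v : MonoidAlgebra ℤ G}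
    (hv : v ∈ A.carrier) (n : ℕ) : v ^ n ∈ A.carrier := by
  induction n with
  | zero => rw [pow_zero]; exact SR17.one_mem_carrier A
  | succ n ih => rw [pow_succ]; exact SR17.mul_mem_carrier A ih hv

end SR17

section SR17b
variable {G : Type*} [Group G] [Fintype G] [DecidableEq G]

lemma SR17.commute_single (hcomm : ∀ a b : G, a * b = b * a) (a x : G) :
    Commute (MonoidAlgebra.single a (1:ℤ)) (MonoidAlgebra.single x (1:ℤ)) := by
  unfold Commute SemiconjBy
  rw [MonoidAlgebra.single_mul_single, MonoidAlgebra.single_mul_single, hcomm]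

lemma SR17.frob (hcomm : ∀ a b : G, a * b = b * a) {q : ℕ} (hq : q.Prime) (X : Finset G) :
    ∃ τ : MonoidAlgebra ℤ G,
      grpInd X ^ q = (∑ x ∈ X, MonoidAlgebra.single (x ^ q) (1:ℤ)) + (q : ℤ) • τ := by
  classical
  induction X using Finset.induction with
  | empty =>
    refine ⟨0, ?_⟩
    simp [grpInd, zero_pow hq.ne_zero]
  | insert a s ha ih =>
    obtain ⟨τ, hτ⟩ := ih
    have hsplit : grpInd (insert a s) = MonoidAlgebra.single a (1:ℤ) + grpInd s := by
      rw [grpInd, grpInd, Finset.sum_insert ha]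
    have hcomm' : Commute (MonoidAlgebra.single a (1:ℤ)) (grpInd s) := by
      rw [grpInd]
      exact Commute.sum_right _ _ _ fun x _ => SR17.commute_single hcomm a x
    obtain ⟨r, hr⟩ := hcomm'.exists_add_pow_prime_eq hq
    refine ⟨τ + MonoidAlgebra.single a (1:ℤ) * grpInd s * r, ?_⟩
    rw [hsplit, hr, hτ, MonoidAlgebra.single_pow, one_pow, Finset.sum_insert ha]
    simp only [zsmul_eq_mul, Int.cast_natCast, mul_add, mul_assoc]
    abel
end SR17b

section SR17c
variable {G : Type*} [Group G] [Fintype G] [DecidableEq G]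

lemma SR17.pow_inj {p : ℕ} (hp : p.Prime) (hG : Fintype.card G = p) {m : ℕ} (hm : ¬ p ∣ m) :
    Function.Injective (fun x : G => x ^ m) := by
  have hcop : (Nat.card G).Coprime m := by
    rw [Nat.card_eq_fintype_card, hG]
    exact (Nat.Prime.coprime_iff_not_dvd hp).mpr hm
  have h := (powCoprime hcop).injective
  simpa [powCoprime] using h

lemma SR17.image_pow_prime (A : SchurRing G) (hcomm : ∀ a b : G, a * b = b * a)
    {p q : ℕ} (hp : p.Prime) (hG : Fintype.card G = p) (hq : q.Prime) (hqp : q ≠ p)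
    {S : Finset G} (hS : grpInd S ∈ A.carrier) :
    grpInd (S.image (· ^ q)) ∈ A.carrier := by
  classical
  have hqinj : Function.Injective (fun x : G => x ^ q) :=
    SR17.pow_inj hp hG (fun h => hqp ((Nat.prime_dvd_prime_iff_eq hp hq).mp h).symm)
  obtain ⟨τ, hτ⟩ := SR17.frob hcomm hq S
  have himg : grpInd (S.image (· ^ q)) = ∑ x ∈ S, MonoidAlgebra.single (x ^ q) (1:ℤ) := by
    rw [grpInd, Finset.sum_image (fun x _ y _ h => hqinj h)]
  have hpow : grpInd S ^ q ∈ A.carrier := SR17.pow_mem_carrier A hS q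
  rw [← himg] at hτ
  apply SR17.mem_carrier_of_parts
  intro X hX
  by_cases hmeet : ∃ y0 ∈ X, y0 ∈ S.image (· ^ q)
  · left
    obtain ⟨y0, hy0X, hy0S⟩ := hmeet
    intro y hy
    have hconst := SR17.coeff_const A hpow hX hy hy0X
    rw [hτ, MonoidAlgebra.coeff_add, MonoidAlgebra.coeff_smul, Finsupp.add_apply, Finsupp.add_apply, Finsupp.smul_apply, Finsupp.smul_apply,
      SR17.grpInd_apply, SR17.grpInd_apply, if_pos hy0S] at hconst
    by_contra hyS
    rw [if_neg hyS] at hconst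
    simp only [smul_eq_mul] at hconst
    have hdvd : (q : ℤ) ∣ 1 := ⟨τ.coeff y - τ.coeff y0, by linear_combination -hconst⟩
    have := Int.le_of_dvd one_pos hdvd
    have h2 := hq.two_le
    omega
  · right
    rw [Finset.disjoint_left]
    intro a haX haS
    exact hmeet ⟨a, haX, haS⟩

lemma SR17.image_pow (A : SchurRing G) (hcomm : ∀ a b : G, a * b = b * a)
    {p : ℕ} (hp : p.Prime) (hG : Fintype.card G = p) :
    ∀ m : ℕ, ¬ p ∣ m → ∀ S : Finset G, grpInd S ∈ A.carrier →
      grpInd (S.image (· ^ m)) ∈ A.carrier := by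
  intro m
  induction m using Nat.strong_induction_on with
  | _ m ih =>
    intro hm S hS
    rcases eq_or_ne m 1 with rfl | hm1
    · simpa [pow_one] using hS
    · have hm0 : m ≠ 0 := fun h => hm (h ▸ dvd_zero p)
      obtain ⟨q, hq, hqd⟩ := Nat.exists_prime_and_dvd hm1
      obtain ⟨k, rfl⟩ := hqd
      have hqp : q ≠ p := fun h => hm (h ▸ dvd_mul_right q k)
      have hk : ¬ p ∣ k := fun h => hm (Dvd.dvd.mul_left h q)
      have hklt : k < q * k := by
        have : k ≠ 0 := fun h => hm0 (by simp [h])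
        nlinarith [hq.two_le, Nat.pos_of_ne_zero this]
      have h1 : grpInd (S.image (· ^ q)) ∈ A.carrier :=
        SR17.image_pow_prime A hcomm hp hG hq hqp hS
      have h2 := ih k hklt hk _ h1
      have : (S.image (· ^ q)).image (· ^ k) = S.image (· ^ (q * k)) := by
        rw [Finset.image_image]
        congr 1
        funext x
        simp [← pow_mul]
      rwa [this] at h2
end SR17c

section SR17d
variable {G : Type*} [Group G] [Fintype G] [DecidableEq G]

lemma SR17.exists_pow_eq {p : ℕ} (hp : p.Prime) (hG : Fintype.card G = p)
    {g h : G} (hg : g ≠ 1) (hh : h ≠ 1) : ∃ m : ℕ, ¬ p ∣ m ∧ g ^ m = h := by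
  haveI : Fact p.Prime := ⟨hp⟩
  have htop : Submonoid.powers g = ⊤ :=
    powers_eq_top_of_prime_card (by rw [Nat.card_eq_fintype_card, hG]) hg
  have hmem : h ∈ Submonoid.powers g := htop ▸ Submonoid.mem_top h
  obtain ⟨m, hm⟩ := hmem
  refine ⟨m, fun hdvd => ?_, hm⟩
  obtain ⟨t, rfl⟩ := hdvd
  have hm' : g ^ (p * t) = h := hm
  rw [pow_mul, ← hG, pow_card_eq_one, one_pow] at hm'
  exact hh hm'.symm

lemma SR17.exists_inv_exp {p : ℕ} (hp : p.Prime) (hG : Fintype.card G = p)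
    {n : ℕ} (hn : ¬ p ∣ n) : ∃ n' : ℕ, ¬ p ∣ n' ∧ ∀ x : G, (x ^ n) ^ n' = x := by
  have hcop : Nat.Coprime p n := (Nat.Prime.coprime_iff_not_dvd hp).mpr hn
  obtain ⟨n', -, hn'⟩ := Nat.exists_mul_mod_eq_one_of_coprime hcop.symm hp.one_lt
  refine ⟨n', fun hdvd => ?_, fun x => ?_⟩
  · obtain ⟨t, rfl⟩ := hdvd
    rw [show n * (p * t) = p * (n * t) by ring, Nat.mul_mod_right] at hn'
    exact absurd hn' (by norm_num)
  · rw [← pow_mul]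
    conv_rhs => rw [← pow_one x]
    rw [← hn', ← Nat.div_add_mod (n * n') p, pow_add, pow_mul, ← hG, pow_card_eq_one,
      one_pow, one_mul, Nat.div_add_mod]

lemma SR17.card_image_pow {p : ℕ} (hp : p.Prime) (hG : Fintype.card G = p)
    {m : ℕ} (hm : ¬ p ∣ m) (S : Finset G) : (S.image (· ^ m)).card = S.card :=
  Finset.card_image_of_injective S (SR17.pow_inj hp hG hm)

/-- L1: if some basic set meets its image under `·^m`, the image equals it. -/
lemma SR17.part_image_fix (A : SchurRing G) (hcomm : ∀ a b : G, a * b = b * a)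
    {p : ℕ} (hp : p.Prime) (hG : Fintype.card G = p)
    {X : Finset G} (hX : X ∈ A.parts) {m : ℕ} (hm : ¬ p ∣ m)
    {g : G} (hgX : g ∈ X) (hgm : g ^ m ∈ X) : X.image (· ^ m) = X := by
  have hmem : grpInd (X.image (· ^ m)) ∈ A.carrier :=
    SR17.image_pow A hcomm hp hG m hm X (Submodule.subset_span ⟨X, hX, rfl⟩)
  have hsub : X ⊆ X.image (· ^ m) :=
    SR17.part_subset A hmem hX hgm (Finset.mem_image_of_mem _ hgX)
  exact (Finset.eq_of_subset_of_card_le hsub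
    (le_of_eq (SR17.card_image_pow hp hG hm X))).symm

/-- L2: if some nontrivial basic set is fixed by `·^m`, then all basic sets are. -/
lemma SR17.all_parts_fixed (A : SchurRing G) (hcomm : ∀ a b : G, a * b = b * a)
    {p : ℕ} (hp : p.Prime) (hG : Fintype.card G = p)
    {X : Finset G} (hX : X ∈ A.parts) (hX1 : X ≠ {1}) {m : ℕ} (hm : ¬ p ∣ m)
    (hfix : X.image (· ^ m) = X) :
    ∀ Y ∈ A.parts, Y.image (· ^ m) = Y := by
  intro Y hY
  by_cases hY1 : Y = {1}
  · subst hY1; simp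
  · obtain ⟨g, hg⟩ := A.nonempty_mem X hX
    obtain ⟨y, hy⟩ := A.nonempty_mem Y hY
    have hg1 : g ≠ 1 := by
      rintro rfl
      exact hX1 (SR17.part_unique A hX A.one_mem hg (Finset.mem_singleton_self 1))
    have hy1 : y ≠ 1 := by
      rintro rfl
      exact hY1 (SR17.part_unique A hY A.one_mem hy (Finset.mem_singleton_self 1))
    obtain ⟨n, hn, hgn⟩ := SR17.exists_pow_eq hp hG hg1 hy1
    obtain ⟨n', hn', hinv⟩ := SR17.exists_inv_exp hp hG (G := G) hn
    have hXn : grpInd (X.image (· ^ n)) ∈ A.carrier :=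
      SR17.image_pow A hcomm hp hG n hn X (Submodule.subset_span ⟨X, hX, rfl⟩)
    have hYn' : grpInd (Y.image (· ^ n')) ∈ A.carrier :=
      SR17.image_pow A hcomm hp hG n' hn' Y (Submodule.subset_span ⟨Y, hY, rfl⟩)
    have hYsub : Y ⊆ X.image (· ^ n) :=
      SR17.part_subset A hXn hY hy (hgn ▸ Finset.mem_image_of_mem _ hg)
    have hXsub : X ⊆ Y.image (· ^ n') := by
      apply SR17.part_subset A hYn' hX hg
      have : y ^ n' = g := by rw [← hgn, hinv]
      exact this ▸ Finset.mem_image_of_mem _ hy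
    -- cards are equal
    have hYX : Y = X.image (· ^ n) := by
      apply Finset.eq_of_subset_of_card_le hYsub
      rw [SR17.card_image_pow hp hG hn X]
      calc X.card ≤ (Y.image (· ^ n')).card := Finset.card_le_card hXsub
        _ = Y.card := SR17.card_image_pow hp hG hn' Y
    have hswap : (X.image (· ^ n)).image (· ^ m) = (X.image (· ^ m)).image (· ^ n) := by
      rw [Finset.image_image, Finset.image_image]
      congr 1
      funext x
      simp only [Function.comp_apply, ← pow_mul, Nat.mul_comm]
    rw [hYX, hswap, hfix]

end SR17d

/-- every Schur ring over a group of prime order is cyclotomic: its basic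
sets are exactly the orbits of some `K ≤ Aut(G)`. -/
theorem stmt17 {G : Type*} [Group G] [Fintype G] [DecidableEq G]
    (p : ℕ) (hp : p.Prime) (hG : Fintype.card G = p) (A : SchurRing G) :
    ∃ K : Subgroup (MulAut G), ∀ X : Finset G,
      X ∈ A.parts ↔ ∃ g : G, X = (Set.toFinite {h : G | ∃ κ ∈ K, κ g = h}).toFinset := by
  classical
  haveI : Fact p.Prime := ⟨hp⟩
  have hcyc : IsCyclic G := isCyclic_of_prime_card (by rw [Nat.card_eq_fintype_card, hG])
  have hcomm : ∀ a b : G, a * b = b * a := fun a b => by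
    letI := IsCyclic.commGroup (α := G)
    exact mul_comm a b
  have powBij : ∀ m : ℕ, ¬ p ∣ m → Function.Bijective (fun x : G => x ^ m) := fun m hm =>
    Finite.injective_iff_bijective.mp (SR17.pow_inj hp hG hm)
  let powAut : ∀ m : ℕ, ¬ p ∣ m → MulAut G := fun m hm =>
    MulEquiv.ofBijective
      ({ toFun := fun x => x ^ m
         map_one' := one_pow m
         map_mul' := fun x y => (show Commute x y from hcomm x y).mul_pow m } : G →* G)
      (powBij m hm)
  have hpowAut : ∀ (m : ℕ) (hm : ¬ p ∣ m) (x : G), (powAut m hm) x = x ^ m :=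
    fun _ _ _ => rfl
  let K : Subgroup (MulAut G) :=
    { carrier := {κ : MulAut G | ∀ Y ∈ A.parts, Y.image ⇑κ = Y}
      one_mem' := by
        intro Y hY
        simp
      mul_mem' := by
        intro κ κ' hκ hκ' Y hY
        have h1 : Y.image ⇑(κ * κ') = (Y.image ⇑κ').image ⇑κ := by
          rw [Finset.image_image]; rfl
        rw [h1, hκ' Y hY, hκ Y hY]
      inv_mem' := by
        intro κ hκ Y hY
        have h2 := hκ Y hY
        calc Y.image ⇑κ⁻¹ = (Y.image ⇑κ).image ⇑κ⁻¹ := by rw [h2]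
          _ = Y.image (⇑κ⁻¹ ∘ ⇑κ) := Finset.image_image
          _ = Y := by
              have h3 : (⇑κ⁻¹ ∘ ⇑κ) = id := by
                funext x
                simp
              rw [h3, Finset.image_id] }
  have hKmem : ∀ κ : MulAut G, κ ∈ K ↔ ∀ Y ∈ A.parts, Y.image ⇑κ = Y := fun κ => Iff.rfl
  have key : ∀ g : G, ∀ X ∈ A.parts, g ∈ X →
      (Set.toFinite {h : G | ∃ κ ∈ K, κ g = h}).toFinset = X := by
    intro g X hX hg
    ext h
    rw [Set.Finite.mem_toFinset, Set.mem_setOf_eq]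
    constructor
    · rintro ⟨κ, hκ, rfl⟩
      have himg := (hKmem κ).mp hκ X hX
      exact himg ▸ Finset.mem_image_of_mem ⇑κ hg
    · intro hh
      by_cases hg1 : g = 1
      · subst hg1
        have hX1 : X = {1} := SR17.part_unique A hX A.one_mem hg (Finset.mem_singleton_self 1)
        subst hX1
        exact ⟨1, K.one_mem, by simpa using (Finset.mem_singleton.mp hh).symm⟩
      · have hX1 : X ≠ {1} := fun heq => hg1 (by rw [heq] at hg; exact Finset.mem_singleton.mp hg)
        have hh1 : h ≠ 1 := fun heq =>
          hX1 (SR17.part_unique A hX A.one_mem (heq ▸ hh) (Finset.mem_singleton_self 1))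
        obtain ⟨m, hm, hgm⟩ := SR17.exists_pow_eq hp hG hg1 hh1
        have hfix : X.image (· ^ m) = X :=
          SR17.part_image_fix A hcomm hp hG hX hm hg (hgm ▸ hh)
        have hall := SR17.all_parts_fixed A hcomm hp hG hX hX1 hm hfix
        refine ⟨powAut m hm, (hKmem _).mpr (fun Y hY => ?_), hgm⟩
        have hco : ⇑(powAut m hm) = (· ^ m) := rfl
        rw [hco]
        exact hall Y hY
  refine ⟨K, fun X => ⟨fun hX => ?_, ?_⟩⟩
  · obtain ⟨g, hg⟩ := A.nonempty_mem X hX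
    exact ⟨g, (key g X hX hg).symm⟩
  · rintro ⟨g, rfl⟩
    obtain ⟨X, hX, hg⟩ := A.cover g
    rw [key g X hX hg]
    exact hX
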